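/- Let x = Σ_{i≥1}[i]·x_i ∈ Γ_s (s ≥ 2) lie in ker Sq^1 ∩ ker Sq^2. Then the element x' = Σ_{j≥2}[2j]·x_{2j−3} satisfies x'Sq^3 = Σ_{i≥2}[i]·x_i, i.e., x − [1]·x_1 lies in the image of Sq^3. -/

import Mathlib

noncomputable section

/-- `Γ`: the free associative F₂-algebra on non-commuting generators `[a]`,
modelled as the monoid algebra of the free monoid on ℕ (only letters `a ≥ 1`
are used; the Steenrod action never produces the letter `0` from them). -/
abbrev Gam : Type := MonoidAlgebra (ZMod 2) (FreeMonoid ℕ)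

/-- The generator `[a]` of `Γ`. -/
def gen (a : ℕ) : Gam := MonoidAlgebra.single (FreeMonoid.ofList [a]) 1

/-- The right Steenrod action on a word, defined on generators by
`[a]Sq^i = C(a−i, i)·[a−i]` (mod 2) and extended by the Cartan formula. -/
def sqWord : List ℕ → ℕ → Gam
  | [], n => if n = 0 then 1 else 0
  | a :: w, n =>
      ∑ p ∈ Finset.range (n + 1),
        (Nat.choose (a - p) p : ZMod 2) • (gen (a - p) * sqWord w (n - p))

/-- The right Steenrod action on `Γ`: `SqG n x = x·Sq^n`. -/
def SqG (n : ℕ) (x : Gam) : Gam :=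
  Finsupp.sum x.coeff fun w c => c • sqWord (FreeMonoid.toList w) n

/-- `x` is homogeneous of length `s` (i.e. `x ∈ Γ_s`). -/
def homLen (s : ℕ) (x : Gam) : Prop :=
  ∀ w ∈ x.coeff.support, (FreeMonoid.toList w).length = s

-- basic lemmas
lemma add_self_zero (y : Gam) : y + y = 0 := by
  calc y + y = (1 : ZMod 2) • y + (1 : ZMod 2) • y := by rw [one_smul]
  _ = ((1 : ZMod 2) + 1) • y := (add_smul _ _ _).symm
  _ = 0 := by rw [show (1 : ZMod 2) + 1 = 0 from rfl, zero_smul]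

lemma SqG_single (n : ℕ) (w : FreeMonoid ℕ) (c : ZMod 2) :
    SqG n (MonoidAlgebra.single w c) = c • sqWord (FreeMonoid.toList w) n := by
  unfold SqG
  rw [MonoidAlgebra.coeff_single]
  exact Finsupp.sum_single_index (by simp)

lemma SqG_add (n : ℕ) (x y : Gam) : SqG n (x + y) = SqG n x + SqG n y := by
  unfold SqG
  rw [MonoidAlgebra.coeff_add]
  exact Finsupp.sum_add_index' (fun a => by simp) (fun a b₁ b₂ => add_smul _ _ _)

lemma SqG_zero' (n : ℕ) : SqG n (0 : Gam) = 0 := by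
  unfold SqG
  rw [MonoidAlgebra.coeff_zero]
  exact Finsupp.sum_zero_index

lemma SqG_smul (n : ℕ) (c : ZMod 2) (x : Gam) : SqG n (c • x) = c • SqG n x := by
  unfold SqG
  rw [MonoidAlgebra.coeff_smul, Finsupp.sum_smul_index' (h := fun w d => d • sqWord (FreeMonoid.toList w) n)
    (fun i => zero_smul _ _), Finsupp.smul_sum]
  simp [smul_smul]

lemma gen_mul_single (b : ℕ) (w : FreeMonoid ℕ) (c : ZMod 2) :
    gen b * MonoidAlgebra.single w c = MonoidAlgebra.single (FreeMonoid.of b * w) c := by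
  rw [gen, MonoidAlgebra.single_mul_single, one_mul]
  rfl

lemma toList_of_mul (b : ℕ) (w : FreeMonoid ℕ) :
    FreeMonoid.toList (FreeMonoid.of b * w) = b :: FreeMonoid.toList w := by
  rw [FreeMonoid.toList_mul, FreeMonoid.toList_of]; rfl

lemma sqWord_zero (w : List ℕ) :
    sqWord w 0 = MonoidAlgebra.single (FreeMonoid.ofList w) 1 := by
  induction w with
  | nil => simp [sqWord, MonoidAlgebra.one_def]
  | cons a v ih =>
      rw [sqWord]
      rw [Finset.sum_range_one]
      norm_num
      rw [ih, gen_mul_single]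

lemma SqG_id (x : Gam) : SqG 0 x = x := by
  unfold SqG
  conv_rhs => rw [← MonoidAlgebra.sum_coeff_single x]
  refine Finsupp.sum_congr fun w _ => ?_
  rw [sqWord_zero, MonoidAlgebra.smul_single, smul_eq_mul, mul_one, FreeMonoid.ofList_toList]

lemma SqG_gen_mul (n b : ℕ) (z : Gam) :
    SqG n (gen b * z) =
      ∑ p ∈ Finset.range (n + 1),
        (Nat.choose (b - p) p : ZMod 2) • (gen (b - p) * SqG (n - p) z) := by
  induction z using MonoidAlgebra.induction_linear with
  | zero => simp [SqG_zero']
  | add f g hf hg =>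
      rw [mul_add, SqG_add, hf, hg, ← Finset.sum_add_distrib]
      refine Finset.sum_congr rfl fun p _ => ?_
      rw [SqG_add, mul_add, smul_add]
  | single w c =>
      rw [gen_mul_single, SqG_single, toList_of_mul, sqWord, Finset.smul_sum]
      refine Finset.sum_congr rfl fun p _ => ?_
      rw [SqG_single, mul_smul_comm, smul_comm]

lemma gen_mul_eq_mapDomain (b : ℕ) (z : Gam) :
    gen b * z = MonoidAlgebra.mapDomain (fun w => FreeMonoid.of b * w) z := by
  induction z using MonoidAlgebra.induction_linear with
  | zero => simp [MonoidAlgebra.mapDomain_zero]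
  | add f g hf hg => rw [mul_add, hf, hg, MonoidAlgebra.mapDomain_add]
  | single w c => rw [gen_mul_single, MonoidAlgebra.mapDomain_single]

lemma of_mul_injective (b : ℕ) : Function.Injective (fun w => FreeMonoid.of b * w) :=
  fun u v h => mul_left_cancel h

/-- the "strip first letter i" additive projection, applied pointwise -/
lemma strip_gen_mul (i j : ℕ) (z : Gam) (w : FreeMonoid ℕ) :
    (gen j * z).coeff (FreeMonoid.of i * w) = if j = i then z.coeff w else 0 := by
  rw [gen_mul_eq_mapDomain, MonoidAlgebra.mapDomain, MonoidAlgebra.coeff_ofCoeff]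
  by_cases h : j = i
  · subst h
    rw [if_pos rfl, Finsupp.mapDomain_apply (of_mul_injective j)]
  · rw [if_neg h]
    refine Finsupp.mapDomain_notin_range _ _ ?_
    rintro ⟨u, hu⟩
    apply h
    have := congrArg FreeMonoid.toList hu
    rw [toList_of_mul, toList_of_mul] at this
    exact (List.cons.injEq _ _ _ _ ▸ this).1

lemma extract {K : ℕ} {z : ℕ → Gam}
    (h : ∑ i ∈ Finset.range K, gen i * z i = 0) : ∀ i, i < K → z i = 0 := by
  intro i hi
  ext w
  have := congrArg (fun t : Gam => t.coeff (FreeMonoid.of i * w)) h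
  simp only [MonoidAlgebra.coeff_zero, Finsupp.coe_zero, Pi.zero_apply] at this
  rw [MonoidAlgebra.coeff_sum, Finset.sum_apply'] at this
  rw [show (0 : ZMod 2) = 0 from rfl] at this
  calc (z i).coeff w = ∑ j ∈ Finset.range K, (gen j * z j).coeff (FreeMonoid.of i * w) := by
        rw [Finset.sum_congr rfl fun j _ => strip_gen_mul i j (z j) w]
        rw [Finset.sum_ite_eq' (Finset.range K) i (fun j => (z j).coeff w)]
        rw [if_pos (Finset.mem_range.2 hi)]
  _ = 0 := this

-- coefficient lemmas
lemma coef_consec (a : ℕ) :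
    ((Nat.choose (a - 1) 1 : ℕ) : ZMod 2) * ((Nat.choose (a - 2) 1 : ℕ) : ZMod 2) = 0 := by
  rw [Nat.choose_one_right, Nat.choose_one_right, ← Nat.cast_mul]
  have h2 : (2 : ℕ) ∣ (a - 1) * (a - 2) := by
    rcases Nat.even_or_odd (a - 1) with h | h
    · exact h.two_dvd.mul_right _
    · have : Even (a - 2) := by
        rw [Nat.even_iff]
        rw [Nat.odd_iff] at h
        omega
      exact this.two_dvd.mul_left _
  exact (ZMod.natCast_eq_zero_iff _ 2).2 h2

lemma coef_adem (a : ℕ) :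
    ((Nat.choose (a - 1) 1 : ℕ) : ZMod 2) * ((Nat.choose (a - 3) 2 : ℕ) : ZMod 2)
      = ((Nat.choose (a - 3) 3 : ℕ) : ZMod 2) := by
  rcases Nat.lt_or_ge a 5 with h | h
  · interval_cases a <;> decide
  · obtain ⟨k, rfl⟩ : ∃ k, a = k + 5 := ⟨a - 5, by omega⟩
    have key := Nat.choose_succ_right_eq (k + 2) 2
    have h1 : k + 5 - 1 = k + 4 := by omega
    have h3 : k + 5 - 3 = k + 2 := by omega
    rw [h1, h3, Nat.choose_one_right]
    have hc := congrArg (fun t : ℕ => (t : ZMod 2)) key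
    simp only [Nat.cast_mul] at hc
    have : ((3 : ℕ) : ZMod 2) = 1 := rfl
    rw [this, mul_one] at hc
    rw [hc]
    have h4 : k + 2 - 2 = k := by omega
    rw [h4]
    have : ((k + 4 : ℕ) : ZMod 2) = ((k : ℕ) : ZMod 2) := by
      push_cast
      rw [show (4 : ZMod 2) = 0 by decide]
      ring
    rw [this, mul_comm]

-- small expansions
lemma SqG1_gen_mul (b : ℕ) (z : Gam) :
    SqG 1 (gen b * z) = gen b * SqG 1 z
      + ((Nat.choose (b-1) 1 : ℕ) : ZMod 2) • (gen (b-1) * z) := by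
  rw [SqG_gen_mul]
  rw [Finset.sum_range_succ, Finset.sum_range_one]
  norm_num [SqG_id]

lemma SqG2_gen_mul (b : ℕ) (z : Gam) :
    SqG 2 (gen b * z) = gen b * SqG 2 z
      + ((Nat.choose (b-1) 1 : ℕ) : ZMod 2) • (gen (b-1) * SqG 1 z)
      + ((Nat.choose (b-2) 2 : ℕ) : ZMod 2) • (gen (b-2) * z) := by
  rw [SqG_gen_mul]
  rw [Finset.sum_range_succ, Finset.sum_range_succ, Finset.sum_range_one]
  norm_num [SqG_id]

lemma SqG3_gen_mul (b : ℕ) (z : Gam) :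
    SqG 3 (gen b * z) = gen b * SqG 3 z
      + ((Nat.choose (b-1) 1 : ℕ) : ZMod 2) • (gen (b-1) * SqG 2 z)
      + ((Nat.choose (b-2) 2 : ℕ) : ZMod 2) • (gen (b-2) * SqG 1 z)
      + ((Nat.choose (b-3) 3 : ℕ) : ZMod 2) • (gen (b-3) * z) := by
  rw [SqG_gen_mul]
  rw [Finset.sum_range_succ, Finset.sum_range_succ, Finset.sum_range_succ, Finset.sum_range_one]
  norm_num [SqG_id]

lemma sqWord_cons_one (a : ℕ) (v : List ℕ) :
    sqWord (a :: v) 1 = gen a * sqWord v 1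
      + ((Nat.choose (a-1) 1 : ℕ) : ZMod 2) • (gen (a-1) * sqWord v 0) := by
  rw [sqWord]
  rw [Finset.sum_range_succ, Finset.sum_range_one]
  norm_num

lemma sqWord_cons_three (a : ℕ) (v : List ℕ) :
    sqWord (a :: v) 3 = gen a * sqWord v 3
      + ((Nat.choose (a-1) 1 : ℕ) : ZMod 2) • (gen (a-1) * sqWord v 2)
      + ((Nat.choose (a-2) 2 : ℕ) : ZMod 2) • (gen (a-2) * sqWord v 1)
      + ((Nat.choose (a-3) 3 : ℕ) : ZMod 2) • (gen (a-3) * sqWord v 0) := by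
  rw [sqWord]
  rw [Finset.sum_range_succ, Finset.sum_range_succ, Finset.sum_range_succ, Finset.sum_range_one]
  norm_num

lemma SqG_sqWord_zero (n : ℕ) (v : List ℕ) : SqG n (sqWord v 0) = sqWord v n := by
  rw [sqWord_zero, SqG_single, one_smul, FreeMonoid.toList_ofList]

lemma sq1_sq1_word (w : List ℕ) : SqG 1 (sqWord w 1) = 0 := by
  induction w with
  | nil =>
      rw [show sqWord [] 1 = 0 from rfl, SqG_zero']
  | cons a v ih =>
      rw [sqWord_cons_one, SqG_add, SqG_smul, SqG1_gen_mul, SqG1_gen_mul, ih,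
        SqG_sqWord_zero]
      rw [mul_zero, zero_add, smul_add]
      rw [smul_smul, show a - 1 - 1 = a - 2 from by omega, coef_consec, zero_smul, add_zero,
        add_self_zero]

lemma sq2_sq1_word (w : List ℕ) : SqG 2 (sqWord w 1) = sqWord w 3 := by
  induction w with
  | nil =>
      rw [show sqWord [] 1 = 0 from rfl, SqG_zero', show sqWord [] 3 = 0 from rfl]
  | cons a v ih =>
      rw [sqWord_cons_one, SqG_add, SqG_smul, SqG2_gen_mul, SqG2_gen_mul, ih, sq1_sq1_word,
        SqG_sqWord_zero, SqG_sqWord_zero]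
      rw [mul_zero, smul_zero, add_zero]
      rw [show a - 1 - 1 = a - 2 from by omega, show a - 1 - 2 = a - 3 from by omega]
      rw [smul_add, smul_add, smul_smul, smul_smul, coef_consec, zero_smul, add_zero,
        coef_adem]
      rw [sqWord_cons_three]
      abel

lemma sq2_sq1 (z : Gam) : SqG 2 (SqG 1 z) = SqG 3 z := by
  induction z using MonoidAlgebra.induction_linear with
  | zero => rw [SqG_zero', SqG_zero', SqG_zero']
  | add f g hf hg => rw [SqG_add, SqG_add, SqG_add, hf, hg]
  | single w c => rw [SqG_single, SqG_smul, sq2_sq1_word, SqG_single]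

lemma choose_zmod2 (n k : ℕ) :
    ((n.choose k : ℕ) : ZMod 2)
      = (((n % 2).choose (k % 2) : ℕ) : ZMod 2) * (((n / 2).choose (k / 2) : ℕ) : ZMod 2) := by
  have h : _root_.Fact (Nat.Prime 2) := ⟨Nat.prime_two⟩
  have hm := @Choose.choose_modEq_choose_mod_mul_choose_div n k 2 h
  have h2 := (ZMod.intCast_eq_intCast_iff _ _ _).2 hm
  push_cast at h2 ⊢
  exact h2

lemma cast_two_mul_add (j r : ℕ) : ((2*j+r : ℕ) : ZMod 2) = ((r:ℕ) : ZMod 2) := by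
  push_cast
  rw [show (2 : ZMod 2) = 0 by decide]
  ring

lemma c1 (j : ℕ) : (((2*j+3).choose 1 : ℕ) : ZMod 2) = 1 := by
  rw [choose_zmod2, show (2*j+3) % 2 = 1 by omega, show (2*j+3) / 2 = j + 1 by omega]
  norm_num

lemma c2 (j : ℕ) : (((2*j+2).choose 2 : ℕ) : ZMod 2) = (j : ZMod 2) + 1 := by
  rw [choose_zmod2, show (2*j+2) % 2 = 0 by omega, show (2*j+2) / 2 = j + 1 by omega]
  norm_num

lemma c4 (j : ℕ) : (((2*j+1).choose 2 : ℕ) : ZMod 2) = (j : ZMod 2) := by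
  rw [choose_zmod2, show (2*j+1) % 2 = 1 by omega, show (2*j+1) / 2 = j by omega]
  norm_num

lemma c3 (j : ℕ) : (((2*j+1).choose 3 : ℕ) : ZMod 2) = (j : ZMod 2) := by
  rw [choose_zmod2, show (2*j+1) % 2 = 1 by omega, show (2*j+1) / 2 = j by omega]
  norm_num

lemma eq_of_add_eq_zero' {u v : Gam} (h : u + v = 0) : u = v := by
  have h2 := congrArg (fun t => t + v) h
  simpa [add_assoc, add_self_zero] using h2

lemma SqG_finset_sum (n K : ℕ) (f : ℕ → Gam) :
    SqG n (∑ i ∈ Finset.range K, f i) = ∑ i ∈ Finset.range K, SqG n (f i) := by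
  induction K with
  | zero => simpa using SqG_zero' n
  | succ k ihk => rw [Finset.sum_range_succ, Finset.sum_range_succ, SqG_add, ihk]

lemma sum_pair (f : ℕ → Gam) (N : ℕ) :
    ∑ i ∈ Finset.range (2*N), f i = ∑ j ∈ Finset.range N, (f (2*j) + f (2*j+1)) := by
  induction N with
  | zero => simp
  | succ k ihk =>
      rw [Finset.sum_range_succ, ← ihk, show 2*(k+1) = (2*k+1)+1 by omega,
        Finset.sum_range_succ, Finset.sum_range_succ, add_assoc]

lemma tele (h : ℕ → Gam) (N : ℕ) :
    ∑ j ∈ Finset.range N, (h (j+1) + h j) = h N + h 0 := by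
  induction N with
  | zero => rw [Finset.sum_range_zero, add_self_zero]
  | succ k ihk =>
      rw [Finset.sum_range_succ, ihk]
      have e : h k + h 0 + (h (k+1) + h k) = h (k+1) + h 0 + (h k + h k) := by abel
      rw [e, add_self_zero, add_zero]


/-- If `x = Σ_{i≥1}[i]·x_i ∈ Γ_s` (`s ≥ 2`) lies in `ker Sq¹ ∩ ker Sq²`, then
the element `x' = Σ_{j≥2}[2j]·x_{2j−3}` satisfies `x'Sq³ = Σ_{i≥2}[i]·x_i`;
i.e. `x − [1]·x₁` lies in the image of `Sq³`. -/
theorem stmt_15 (s : ℕ) (hs : 2 ≤ s) (x : Gam) (x_ : ℕ → Gam)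
    (hxlen : homLen s x) (hcomplen : ∀ i, homLen (s - 1) (x_ i))
    (hfin : (Function.support x_).Finite) (h0 : x_ 0 = 0)
    (hx : x = ∑ᶠ i : ℕ, gen i * x_ i)
    (hker1 : SqG 1 x = 0) (hker2 : SqG 2 x = 0) :
    SqG 3 (∑ᶠ j : ℕ, gen (2 * (j + 2)) * x_ (2 * (j + 2) - 3)) =
        ∑ᶠ i : ℕ, gen (i + 2) * x_ (i + 2) ∧
      x + gen 1 * x_ 1 ∈ Set.range (SqG 3) := by
  classical
  obtain ⟨N, hN⟩ : ∃ N, ∀ i, N ≤ i → x_ i = 0 := by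
    refine ⟨hfin.toFinset.sup id + 1, fun i hi => ?_⟩
    by_contra h
    have hm : i ∈ hfin.toFinset := hfin.mem_toFinset.2 h
    have hle := Finset.le_sup (f := id) hm
    simp only [id] at hle
    omega
  have hxsum : ∀ K, N ≤ K → x = ∑ i ∈ Finset.range K, gen i * x_ i := by
    intro K hK
    rw [hx]
    refine finsum_eq_sum_of_support_subset _ fun i hi => ?_
    simp only [Function.mem_support, ne_eq] at hi
    simp only [Finset.coe_range, Set.mem_Iio]
    by_contra hc
    exact hi (by rw [hN i (by omega), mul_zero])
  -- Relation from Sq^1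
  have R1 : ∀ i, SqG 1 (x_ i) = ((i : ℕ) : ZMod 2) • x_ (i+1) := by
    intro i
    rcases Nat.lt_or_ge i (N+1) with hi | hi
    · have h1 : ∑ i ∈ Finset.range (N+1), SqG 1 (gen i * x_ i) = 0 := by
        rw [← SqG_finset_sum, ← hxsum (N+1) (by omega), hker1]
      have hcg := Finset.sum_congr rfl
        (fun i (_ : i ∈ Finset.range (N+1)) => SqG1_gen_mul i (x_ i))
      rw [hcg, Finset.sum_add_distrib] at h1
      have h3 : ∑ i ∈ Finset.range (N+1),
          ((Nat.choose (i-1) 1 : ℕ) : ZMod 2) • (gen (i-1) * x_ i)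
          = ∑ i ∈ Finset.range (N+1), ((i : ℕ) : ZMod 2) • (gen i * x_ (i+1)) := by
        rw [Finset.sum_range_succ'
          (fun i => ((Nat.choose (i-1) 1 : ℕ) : ZMod 2) • (gen (i-1) * x_ i)) N]
        simp only [Nat.add_sub_cancel, Nat.choose_one_right]
        norm_num
        rw [Finset.sum_range_succ (fun i => ((i : ℕ) : ZMod 2) • (gen i * x_ (i+1))) N]
        rw [hN (N+1) (by omega), mul_zero, smul_zero, add_zero]
      rw [h3, ← Finset.sum_add_distrib] at h1
      have h4 : ∀ j ∈ Finset.range (N+1),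
          gen j * SqG 1 (x_ j) + ((j : ℕ) : ZMod 2) • (gen j * x_ (j+1))
            = gen j * (SqG 1 (x_ j) + ((j : ℕ) : ZMod 2) • x_ (j+1)) := by
        intro j _
        rw [mul_add, mul_smul_comm]
      rw [Finset.sum_congr rfl h4] at h1
      exact eq_of_add_eq_zero'
        (extract (z := fun j => SqG 1 (x_ j) + ((j : ℕ) : ZMod 2) • x_ (j+1)) h1 i hi)
    · rw [hN i (by omega), hN (i+1) (by omega), SqG_zero', smul_zero]
  -- Relation from Sq^2
  have R2 : ∀ i, SqG 2 (x_ i) = ((i : ℕ) : ZMod 2) • SqG 1 (x_ (i+1))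
      + ((Nat.choose i 2 : ℕ) : ZMod 2) • x_ (i+2) := by
    intro i
    rcases Nat.lt_or_ge i (N+2) with hi | hi
    · have h1 : ∑ i ∈ Finset.range (N+2), SqG 2 (gen i * x_ i) = 0 := by
        rw [← SqG_finset_sum, ← hxsum (N+2) (by omega), hker2]
      have hcg := Finset.sum_congr rfl
        (fun i (_ : i ∈ Finset.range (N+2)) => SqG2_gen_mul i (x_ i))
      rw [hcg, Finset.sum_add_distrib, Finset.sum_add_distrib] at h1
      have hM : ∑ i ∈ Finset.range (N+2),
          ((Nat.choose (i-1) 1 : ℕ) : ZMod 2) • (gen (i-1) * SqG 1 (x_ i))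
          = ∑ i ∈ Finset.range (N+2), ((i : ℕ) : ZMod 2) • (gen i * SqG 1 (x_ (i+1))) := by
        rw [Finset.sum_range_succ'
          (fun i => ((Nat.choose (i-1) 1 : ℕ) : ZMod 2) • (gen (i-1) * SqG 1 (x_ i))) (N+1)]
        simp only [Nat.add_sub_cancel, Nat.choose_one_right]
        norm_num
        rw [Finset.sum_range_succ
          (fun i => ((i : ℕ) : ZMod 2) • (gen i * SqG 1 (x_ (i+1)))) (N+1)]
        rw [hN (N+2) (by omega), SqG_zero', mul_zero, smul_zero, add_zero]
      have hB : ∑ i ∈ Finset.range (N+2),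
          ((Nat.choose (i-2) 2 : ℕ) : ZMod 2) • (gen (i-2) * x_ i)
          = ∑ i ∈ Finset.range (N+2),
            ((Nat.choose i 2 : ℕ) : ZMod 2) • (gen i * x_ (i+2)) := by
        rw [Finset.sum_range_succ'
          (fun i => ((Nat.choose (i-2) 2 : ℕ) : ZMod 2) • (gen (i-2) * x_ i)) (N+1)]
        rw [Finset.sum_range_succ'
          (fun i => ((Nat.choose (i+1-2) 2 : ℕ) : ZMod 2) • (gen (i+1-2) * x_ (i+1))) N]
        have e0 : ((Nat.choose (0-2) 2 : ℕ) : ZMod 2) • (gen (0-2) * x_ 0) = 0 := by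
          rw [h0, mul_zero, smul_zero]
        have e1 : ((Nat.choose (0+1-2) 2 : ℕ) : ZMod 2) • (gen (0+1-2) * x_ (0+1)) = 0 := by
          norm_num
        rw [e0, e1, add_zero, add_zero]
        have eidx : ∀ j ∈ Finset.range N,
            ((Nat.choose (j+1+1-2) 2 : ℕ) : ZMod 2) • (gen (j+1+1-2) * x_ (j+1+1))
            = ((Nat.choose j 2 : ℕ) : ZMod 2) • (gen j * x_ (j+2)) := by
          intro j _
          rw [show j+1+1-2 = j from by omega, show j+1+1 = j+2 from by omega]
        rw [Finset.sum_congr rfl eidx]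
        rw [Finset.sum_range_succ
          (fun i => ((Nat.choose i 2 : ℕ) : ZMod 2) • (gen i * x_ (i+2))) (N+1)]
        rw [Finset.sum_range_succ
          (fun i => ((Nat.choose i 2 : ℕ) : ZMod 2) • (gen i * x_ (i+2))) N]
        rw [hN (N+2) (by omega), hN (N+3) (by omega), mul_zero, mul_zero, smul_zero,
          smul_zero, add_zero, add_zero]
      rw [hM, hB, ← Finset.sum_add_distrib, ← Finset.sum_add_distrib] at h1
      have h4 : ∀ j ∈ Finset.range (N+2),
          gen j * SqG 2 (x_ j) + ((j : ℕ) : ZMod 2) • (gen j * SqG 1 (x_ (j+1)))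
            + ((Nat.choose j 2 : ℕ) : ZMod 2) • (gen j * x_ (j+2))
            = gen j * (SqG 2 (x_ j) + (((j : ℕ) : ZMod 2) • SqG 1 (x_ (j+1))
                + ((Nat.choose j 2 : ℕ) : ZMod 2) • x_ (j+2))) := by
        intro j _
        rw [mul_add, mul_add, mul_smul_comm, mul_smul_comm, add_assoc]
      rw [Finset.sum_congr rfl h4] at h1
      have h5 := extract (z := fun j => SqG 2 (x_ j) + (((j : ℕ) : ZMod 2) • SqG 1 (x_ (j+1))
          + ((Nat.choose j 2 : ℕ) : ZMod 2) • x_ (j+2))) h1 i hi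
      have h6 := eq_of_add_eq_zero' h5
      rw [h6]
    · rw [hN i (by omega), hN (i+1) (by omega), hN (i+2) (by omega), SqG_zero', SqG_zero']
      simp
  -- derived relations
  have r1o : ∀ j, SqG 1 (x_ (2*j+1)) = x_ (2*j+2) := by
    intro j
    rw [R1 (2*j+1), show 2*j+1+1 = 2*j+2 from by omega, cast_two_mul_add j 1, Nat.cast_one,
      one_smul]
  have r1e : ∀ j, SqG 1 (x_ (2*j+2)) = 0 := by
    intro j
    rw [R1 (2*j+2), cast_two_mul_add j 2, show ((2:ℕ) : ZMod 2) = 0 from by decide, zero_smul]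
  have r2e : ∀ j, SqG 2 (x_ (2*j+2)) = ((j : ZMod 2) + 1) • x_ (2*j+4) := by
    intro j
    rw [R2 (2*j+2), show 2*j+2+1 = 2*j+3 from by omega, show 2*j+2+2 = 2*j+4 from by omega,
      cast_two_mul_add j 2, show ((2:ℕ) : ZMod 2) = 0 from by decide, zero_smul, zero_add,
      c2 j]
  have r2o : ∀ j, SqG 2 (x_ (2*j+1)) = (j : ZMod 2) • x_ (2*j+3) := by
    intro j
    rw [R2 (2*j+1), show 2*j+1+1 = 2*j+2 from by omega, show 2*j+1+2 = 2*j+3 from by omega,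
      r1e j, smul_zero, zero_add, c4 j]
  have r3o : ∀ j, SqG 3 (x_ (2*j+1)) = ((j : ZMod 2) + 1) • x_ (2*j+4) := by
    intro j
    rw [← sq2_sq1, r1o j, r2e j]
  -- the two finsums as finite sums
  have e1 : (∑ᶠ j : ℕ, gen (2*(j+2)) * x_ (2*(j+2)-3))
      = ∑ j ∈ Finset.range N, gen (2*j+4) * x_ (2*j+1) := by
    have hsupp : Function.support (fun j => gen (2*(j+2)) * x_ (2*(j+2)-3))
        ⊆ ↑(Finset.range N) := by
      intro j hj
      simp only [Function.mem_support, ne_eq] at hj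
      simp only [Finset.coe_range, Set.mem_Iio]
      by_contra h
      exact hj (by rw [hN (2*(j+2)-3) (by omega), mul_zero])
    rw [finsum_eq_sum_of_support_subset _ hsupp]
    exact Finset.sum_congr rfl fun j _ => by
      rw [show 2*(j+2) = 2*j+4 from by omega, show 2*j+4-3 = 2*j+1 from by omega]
  have e2 : ∀ K, N ≤ K → (∑ᶠ i : ℕ, gen (i+2) * x_ (i+2))
      = ∑ i ∈ Finset.range K, gen (i+2) * x_ (i+2) := by
    intro K hK
    refine finsum_eq_sum_of_support_subset _ fun i hi => ?_
    simp only [Function.mem_support, ne_eq] at hi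
    simp only [Finset.coe_range, Set.mem_Iio]
    by_contra h
    exact hi (by rw [hN (i+2) (by omega), mul_zero])
  -- the per-term computation
  have hterm : ∀ j, SqG 3 (gen (2*j+4) * x_ (2*j+1))
      = ((((j+1 : ℕ) : ZMod 2) • (gen (2*(j+1)+2) * x_ (2*(j+1)+2))
            + (((j+1 : ℕ)) : ZMod 2) • (gen (2*(j+1)+1) * x_ (2*(j+1)+1)))
          + (((j : ℕ) : ZMod 2) • (gen (2*j+2) * x_ (2*j+2))
            + ((j : ℕ) : ZMod 2) • (gen (2*j+1) * x_ (2*j+1))))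
        + (gen (2*j+2) * x_ (2*j+2) + gen (2*j+3) * x_ (2*j+3)) := by
    intro j
    rw [SqG3_gen_mul, show 2*j+4-1 = 2*j+3 from by omega, show 2*j+4-2 = 2*j+2 from by omega,
      show 2*j+4-3 = 2*j+1 from by omega, c1 j, c2 j, c3 j, r3o j, r2o j, r1o j]
    rw [show 2*(j+1)+2 = 2*j+4 from by omega, show 2*(j+1)+1 = 2*j+3 from by omega]
    simp only [mul_smul_comm]
    push_cast
    generalize ((j : ZMod 2)) = c
    match_scalars <;> (revert c; decide)
  -- main identity
  have hmain : SqG 3 (∑ᶠ j : ℕ, gen (2 * (j + 2)) * x_ (2 * (j + 2) - 3)) =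
      ∑ᶠ i : ℕ, gen (i + 2) * x_ (i + 2) := by
    rw [e1, SqG_finset_sum]
    rw [Finset.sum_congr rfl fun j _ => hterm j]
    rw [Finset.sum_add_distrib]
    rw [tele (fun j => ((j : ℕ) : ZMod 2) • (gen (2*j+2) * x_ (2*j+2))
      + ((j : ℕ) : ZMod 2) • (gen (2*j+1) * x_ (2*j+1))) N]
    have hzero : (((N : ℕ) : ZMod 2) • (gen (2*N+2) * x_ (2*N+2))
        + ((N : ℕ) : ZMod 2) • (gen (2*N+1) * x_ (2*N+1)))
        + (((0 : ℕ) : ZMod 2) • (gen (2*0+2) * x_ (2*0+2))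
        + ((0 : ℕ) : ZMod 2) • (gen (2*0+1) * x_ (2*0+1))) = 0 := by
      rw [hN (2*N+2) (by omega), hN (2*N+1) (by omega)]
      simp
    rw [hzero, zero_add]
    rw [e2 (2*N) (by omega), sum_pair (fun i => gen (i+2) * x_ (i+2)) N]
  refine ⟨hmain, Set.mem_range.mpr
    ⟨∑ᶠ j : ℕ, gen (2 * (j + 2)) * x_ (2 * (j + 2) - 3), ?_⟩⟩
  rw [hmain, e2 N le_rfl]
  rw [hxsum (N+2) (by omega)]
  rw [Finset.sum_range_succ' (fun i => gen i * x_ i) (N+1)]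
  rw [Finset.sum_range_succ' (fun i => gen (i+1) * x_ (i+1)) N]
  simp only [Nat.zero_add]
  rw [h0, mul_zero, add_zero]
  rw [add_assoc, add_self_zero, add_zero]
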